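/- Let n ≥ 2. Then |wEnd P_n| = 3^{n−2}(3n−2) − Σ_{r=1}^{n−2} 3^{n−r−2} b(r), where b(r) = 2 Σ_{i=1}^{n−1} a(r,i) and the integers a(r,i), for 1 ≤ r ≤ n−2 and 1 ≤ i ≤ n−1, are defined recursively by: a(1,1) = a(1,2) = 1; a(1,p) = 0 for 3 ≤ p ≤ n−1; for 2 ≤ k ≤ n−2, a(k,1) = a(k−1,1) + a(k−1,2) and a(k,p) = a(k−1,p−1) + a(k−1,p) + a(k−1,p+1) for 2 ≤ p ≤ n−2; a(k,n−1) = 0 for 2 ≤ k ≤ n−3; and a(n−2,n−1) = 1. -/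

import Mathlib

/-- `α` is a weak endomorphism of the path `P_n` (with vertices `0,…,n-1` standing for
`1,…,n`): `|iα - (i+1)α| ≤ 1` for all consecutive pairs of vertices. -/
def IsWEndo {n : ℕ} (f : Function.End (Fin n)) : Prop :=
  ∀ i : ℕ, ∀ h : i + 1 < n,
    |(((f ⟨i, by omega⟩ : Fin n) : ℕ) : ℤ) - (((f ⟨i + 1, h⟩ : Fin n) : ℕ) : ℤ)| ≤ 1

/-- `α` is an endomorphism of the path `P_n`: `|iα - (i+1)α| = 1` for all consecutive
pairs of vertices. -/
def IsEndo {n : ℕ} (f : Function.End (Fin n)) : Prop :=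
  ∀ i : ℕ, ∀ h : i + 1 < n,
    |(((f ⟨i, by omega⟩ : Fin n) : ℕ) : ℤ) - (((f ⟨i + 1, h⟩ : Fin n) : ℕ) : ℤ)| = 1

/-- The recursively defined family `a(r,i)` (for the path with `n` vertices):
`a(1,1) = a(1,2) = 1`; `a(1,p) = 0` for `3 ≤ p ≤ n-1`; for `2 ≤ k ≤ n-2`,
`a(k,1) = a(k-1,1) + a(k-1,2)` and `a(k,p) = a(k-1,p-1) + a(k-1,p) + a(k-1,p+1)` for
`2 ≤ p ≤ n-2`; `a(k,n-1) = 0` for `2 ≤ k ≤ n-3`; and `a(n-2,n-1) = 1`. -/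
def aF (n : ℕ) : ℕ → ℕ → ℕ
  | 0, _ => 0
  | 1, p => if p = 1 ∨ p = 2 then 1 else 0
  | k + 2, p =>
    if p = n - 1 then (if k + 2 = n - 2 then 1 else 0)
    else if p = 1 then aF n (k + 1) 1 + aF n (k + 1) 2
    else aF n (k + 1) (p - 1) + aF n (k + 1) p + aF n (k + 1) (p + 1)

/-- `b(r) = 2 ∑_{i=1}^{n-1} a(r,i)`. -/
def bF (n r : ℕ) : ℕ := 2 * ∑ i ∈ Finset.Icc 1 (n - 1), aF n r i

open Finset

def Padj {n : ℕ} (a b : Fin n) : Prop := (a : ℕ) ≤ (b : ℕ) + 1 ∧ (b : ℕ) ≤ (a : ℕ) + 1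

instance {n : ℕ} (a b : Fin n) : Decidable (Padj a b) := by unfold Padj; infer_instance

lemma Padj.symm {n : ℕ} {a b : Fin n} (h : Padj a b) : Padj b a := ⟨h.2, h.1⟩

def WCond {n m : ℕ} (f : Fin (m + 1) → Fin n) : Prop :=
  ∀ i : ℕ, ∀ h : i + 1 < m + 1, Padj (f ⟨i, by omega⟩) (f ⟨i + 1, h⟩)

open scoped Classical in
noncomputable def Wk (n m : ℕ) : Finset (Fin (m + 1) → Fin n) :=
  Finset.univ.filter WCond

open scoped Classical in
noncomputable def Gw (n m : ℕ) (j k : Fin n) : ℕ :=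
  ((Wk n m).filter fun f => f ⟨0, by omega⟩ = j ∧ f ⟨m, by omega⟩ = k).card

lemma fcongr {n t : ℕ} (f : Fin t → Fin n) {a b : ℕ} (pa : a < t) (pb : b < t) (h : a = b) :
    f ⟨a, pa⟩ = f ⟨b, pb⟩ := by subst h; rfl

lemma mem_Wk {n m : ℕ} {f : Fin (m + 1) → Fin n} : f ∈ Wk n m ↔ WCond f := by
  simp [Wk]

lemma Gw_zero {n : ℕ} (j k : Fin n) : Gw n 0 j k = if j = k then 1 else 0 := by
  classical
  unfold Gw
  split
  · next h =>
    subst h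
    rw [Finset.card_eq_one]
    refine ⟨fun _ => j, ?_⟩
    ext f
    simp only [mem_filter, mem_Wk, mem_singleton, and_self]
    constructor
    · rintro ⟨-, h0⟩
      funext x
      have hx : x = ⟨0, by omega⟩ := by ext; omega
      rw [hx, h0]
    · rintro rfl
      exact ⟨fun i h => by omega, rfl⟩
  · next h =>
    rw [Finset.card_eq_zero]
    ext f
    simp only [mem_filter, Finset.notMem_empty, iff_false]
    rintro ⟨-, h1, h2⟩
    exact h (h1 ▸ h2 ▸ rfl)
section
variable {n m : ℕ}

lemma snoc_mk (g : Fin (m + 1) → Fin n) (k : Fin n) (i : ℕ) (h : i < m + 2) :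
    (Fin.snoc g k : Fin (m + 2) → Fin n) ⟨i, h⟩ = if h' : i < m + 1 then g ⟨i, h'⟩ else k := by
  split
  · next h' =>
    have e : (⟨i, h⟩ : Fin (m + 2)) = Fin.castSucc ⟨i, h'⟩ := rfl
    rw [e, Fin.snoc_castSucc]
  · next h' =>
    have hi : i = m + 1 := by omega
    subst hi
    have e : (⟨m + 1, h⟩ : Fin (m + 2)) = Fin.last (m + 1) := rfl
    rw [e, Fin.snoc_last]

lemma Gw_succ {n : ℕ} (m : ℕ) (j k : Fin n) :
    Gw n (m + 1) j k = ∑ l : Fin n, if Padj l k then Gw n m j l else 0 := by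
  classical
  unfold Gw
  rw [Finset.card_eq_sum_card_fiberwise
      (f := fun f : Fin (m + 2) → Fin n => f ⟨m, by omega⟩) (t := Finset.univ)
      (fun _ _ => Finset.mem_univ _)]
  refine Finset.sum_congr rfl fun l _ => ?_
  by_cases hlk : Padj l k
  · rw [if_pos hlk]
    refine Finset.card_bij'
      (i := fun f _ => fun p : Fin (m + 1) => f ⟨p.val, by omega⟩)
      (j := fun g _ => (Fin.snoc g k : Fin (m + 2) → Fin n)) ?_ ?_ ?_ ?_
    · rintro f hf
      simp only [Finset.mem_filter, mem_Wk] at hf ⊢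
      obtain ⟨⟨hw, h0, hlast⟩, hpen⟩ := hf
      exact ⟨fun i h => hw i (by omega), h0, hpen⟩
    · rintro g hg
      simp only [Finset.mem_filter, mem_Wk] at hg ⊢
      obtain ⟨hw, h0, hlast⟩ := hg
      refine ⟨⟨fun i h => ?_, ?_, ?_⟩, ?_⟩
      · rw [snoc_mk, snoc_mk]
        split
        · next h1 =>
          split
          · next h2 => exact hw i h2
          · next h2 =>
            have hi : i = m := by omega
            subst hi
            exact hlast ▸ hlk
        · next h1 => omega
      · rw [snoc_mk, dif_pos (by omega : 0 < m + 1)]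
        exact h0
      · rw [snoc_mk, dif_neg (by omega : ¬ (m + 1 < m + 1))]
      · rw [snoc_mk, dif_pos (by omega : m < m + 1)]
        exact hlast
    · rintro f hf
      simp only [Finset.mem_filter, mem_Wk] at hf
      obtain ⟨⟨hw, h0, hlast⟩, hpen⟩ := hf
      funext p
      rw [show p = (⟨p.val, p.isLt⟩ : Fin (m + 2)) from rfl, snoc_mk]
      split
      · next h1 => rfl
      · next h1 =>
        rw [← hlast]
        exact (fcongr f _ _ (by omega)).symm
    · rintro g hg
      funext p
      rw [snoc_mk, dif_pos p.isLt]
  · rw [if_neg hlk, Finset.card_eq_zero]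
    ext f
    simp only [Finset.mem_filter, mem_Wk, Finset.notMem_empty, iff_false]
    rintro ⟨⟨hw, h0, hlast⟩, hpen⟩
    have := hw m (by omega)
    rw [hpen, hlast] at this
    exact hlk this
lemma Gw_symm {n : ℕ} (m : ℕ) (j k : Fin n) : Gw n m j k = Gw n m k j := by
  classical
  unfold Gw
  refine Finset.card_bij'
    (i := fun f _ => fun p : Fin (m + 1) => f ⟨m - p.val, by omega⟩)
    (j := fun f _ => fun p : Fin (m + 1) => f ⟨m - p.val, by omega⟩) ?_ ?_ ?_ ?_
  · rintro f hf
    simp only [Finset.mem_filter, mem_Wk] at hf ⊢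
    obtain ⟨hw, h0, hlast⟩ := hf
    refine ⟨fun i h => ?_, ?_, ?_⟩
    · dsimp only
      have h2 := hw (m - i - 1) (by omega)
      have e1 : f ⟨m - i - 1 + 1, by omega⟩ = f ⟨m - i, by omega⟩ := fcongr f _ _ (by omega)
      rw [e1] at h2
      exact ⟨(fcongr f (by omega) (by omega) (by omega : m - (i+1) = m - i - 1)) ▸ h2.2,
        (fcongr f (by omega) (by omega) (by omega : m - (i+1) = m - i - 1)) ▸ h2.1⟩
    · rw [fcongr f _ _ (by omega : m - 0 = m)]
      exact hlast
    · rw [fcongr f _ _ (by omega : m - m = 0)]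
      exact h0
  · rintro f hf
    simp only [Finset.mem_filter, mem_Wk] at hf ⊢
    obtain ⟨hw, h0, hlast⟩ := hf
    refine ⟨fun i h => ?_, ?_, ?_⟩
    · dsimp only
      have h2 := hw (m - i - 1) (by omega)
      have e1 : f ⟨m - i - 1 + 1, by omega⟩ = f ⟨m - i, by omega⟩ := fcongr f _ _ (by omega)
      rw [e1] at h2
      exact ⟨(fcongr f (by omega) (by omega) (by omega : m - (i+1) = m - i - 1)) ▸ h2.2,
        (fcongr f (by omega) (by omega) (by omega : m - (i+1) = m - i - 1)) ▸ h2.1⟩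
    · rw [fcongr f _ _ (by omega : m - 0 = m)]
      exact hlast
    · rw [fcongr f _ _ (by omega : m - m = 0)]
      exact h0
  · rintro f hf
    funext p
    dsimp only
    exact fcongr f _ _ (by have := p.isLt; omega)
  · rintro f hf
    funext p
    dsimp only
    exact fcongr f _ _ (by have := p.isLt; omega)

def frev {N : ℕ} (j : Fin (N + 2)) : Fin (N + 2) := ⟨N + 1 - j.val, by omega⟩

lemma frev_frev {N : ℕ} (j : Fin (N + 2)) : frev (frev j) = j := by
  have := j.isLt
  simp only [frev]
  ext
  simp
  omega

lemma Padj_frev {N : ℕ} {a b : Fin (N + 2)} (h : Padj a b) : Padj (frev a) (frev b) := by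
  obtain ⟨h1, h2⟩ := h
  have := a.isLt
  have := b.isLt
  exact ⟨by simp [frev]; omega, by simp [frev]; omega⟩

lemma Gw_flip {N : ℕ} (m : ℕ) (j k : Fin (N + 2)) :
    Gw (N + 2) m j k = Gw (N + 2) m (frev j) (frev k) := by
  classical
  unfold Gw
  refine Finset.card_bij'
    (i := fun f _ => fun p => frev (f p))
    (j := fun f _ => fun p => frev (f p)) ?_ ?_ ?_ ?_
  · rintro f hf
    simp only [Finset.mem_filter, mem_Wk] at hf ⊢
    obtain ⟨hw, h0, hlast⟩ := hf
    exact ⟨fun i h => Padj_frev (hw i h), by rw [h0], by rw [hlast]⟩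
  · rintro f hf
    simp only [Finset.mem_filter, mem_Wk] at hf ⊢
    obtain ⟨hw, h0, hlast⟩ := hf
    exact ⟨fun i h => Padj_frev (hw i h), by rw [h0, frev_frev], by rw [hlast, frev_frev]⟩
  · rintro f hf
    funext p
    exact frev_frev _
  · rintro f hf
    funext p
    exact frev_frev _

lemma Wk_card_eq {n : ℕ} (m : ℕ) :
    (Wk n m).card = ∑ j : Fin n, ∑ k : Fin n, Gw n m j k := by
  classical
  rw [Finset.card_eq_sum_card_fiberwise
      (f := fun f : Fin (m + 1) → Fin n => (f ⟨0, by omega⟩, f ⟨m, by omega⟩))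
      (t := Finset.univ) (fun _ _ => Finset.mem_univ _)]
  rw [Fintype.sum_prod_type]
  refine Finset.sum_congr rfl fun j _ => Finset.sum_congr rfl fun k _ => ?_
  unfold Gw
  congr 1
  apply Finset.filter_congr
  intro f _
  simp [Prod.ext_iff]

lemma card_neighbors {N : ℕ} (l : Fin (N + 2)) :
    (Finset.univ.filter fun k => Padj l k).card
      + ((if (l : ℕ) = 0 then 1 else 0) + (if (l : ℕ) = N + 1 then 1 else 0)) = 3 := by
  classical
  have hb : ((Finset.univ : Finset (Fin (N+2))).filter fun k => Padj l k).card
      = ((Finset.range (N + 2)).filter fun i => (l : ℕ) ≤ i + 1 ∧ i ≤ (l : ℕ) + 1).card := by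
    refine Finset.card_bij (i := fun k _ => (k : ℕ)) ?_ ?_ ?_
    · rintro k hk
      simp only [Finset.mem_filter, Finset.mem_univ, true_and] at hk
      simp only [Finset.mem_filter, Finset.mem_range]
      exact ⟨k.isLt, hk.1, hk.2⟩
    · rintro a _ b _ hab
      exact Fin.ext hab
    · rintro i hi
      simp only [Finset.mem_filter, Finset.mem_range] at hi
      refine ⟨⟨i, hi.1⟩, ?_, rfl⟩
      simp only [Finset.mem_filter, Finset.mem_univ, true_and]
      exact ⟨hi.2.1, hi.2.2⟩
  rw [hb]
  have he : ((Finset.range (N + 2)).filter fun i => (l : ℕ) ≤ i + 1 ∧ i ≤ (l : ℕ) + 1)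
      = Finset.Icc ((l : ℕ) - 1) (min ((l : ℕ) + 1) (N + 1)) := by
    ext i
    simp only [Finset.mem_filter, Finset.mem_range, Finset.mem_Icc]
    omega
  rw [he, Nat.card_Icc]
  have := l.isLt
  split_ifs <;> omega

noncomputable def ew (N m : ℕ) : ℕ := ∑ jj : Fin (N + 2), Gw (N + 2) m ⟨0, by omega⟩ jj

lemma sum_ind {N m : ℕ} (j : Fin (N + 2)) (b : Fin (N + 2)) :
    ∑ l : Fin (N + 2), (if (l : ℕ) = (b : ℕ) then 1 else 0) * Gw (N + 2) m j l
      = Gw (N + 2) m j b := by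
  classical
  have h : ∀ l : Fin (N + 2), (if (l : ℕ) = (b : ℕ) then 1 else 0) * Gw (N + 2) m j l
      = if l = b then Gw (N + 2) m j l else 0 := by
    intro l
    by_cases hl : l = b
    · rw [if_pos hl, if_pos (by rw [hl]), one_mul]
    · rw [if_neg hl, if_neg (fun hh => hl (Fin.ext hh)), zero_mul]
  rw [Finset.sum_congr rfl fun l _ => h l, Finset.sum_ite_eq' Finset.univ b]
  simp

lemma c_succ (N m : ℕ) :
    3 * (Wk (N + 2) m).card = (Wk (N + 2) (m + 1)).card + 2 * ew N m := by
  classical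
  have h1 : (Wk (N + 2) (m + 1)).card
      = ∑ j : Fin (N + 2), ∑ l : Fin (N + 2),
          (Finset.univ.filter fun k => Padj l k).card * Gw (N + 2) m j l := by
    rw [Wk_card_eq]
    refine Finset.sum_congr rfl fun j _ => ?_
    calc ∑ k : Fin (N + 2), Gw (N + 2) (m + 1) j k
        = ∑ k : Fin (N + 2), ∑ l : Fin (N + 2), if Padj l k then Gw (N + 2) m j l else 0 :=
          Finset.sum_congr rfl fun k _ => Gw_succ m j k
      _ = ∑ l : Fin (N + 2), ∑ k : Fin (N + 2), if Padj l k then Gw (N + 2) m j l else 0 :=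
          Finset.sum_comm
      _ = ∑ l : Fin (N + 2), (Finset.univ.filter fun k => Padj l k).card * Gw (N + 2) m j l := by
          refine Finset.sum_congr rfl fun l _ => ?_
          have e : (∑ k : Fin (N + 2), if Padj l k then Gw (N + 2) m j l else 0)
              = ∑ _k ∈ Finset.univ.filter (fun k => Padj l k), Gw (N + 2) m j l :=
            (Finset.sum_filter _ _).symm
          rw [e, Finset.sum_const, smul_eq_mul]
  have h2 : ∀ j : Fin (N + 2),
      ∑ l : Fin (N + 2), (if (l : ℕ) = 0 then 1 else 0) * Gw (N + 2) m j l
        = Gw (N + 2) m j ⟨0, by omega⟩ := fun j => sum_ind j ⟨0, by omega⟩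
  have h3 : ∀ j : Fin (N + 2),
      ∑ l : Fin (N + 2), (if (l : ℕ) = N + 1 then 1 else 0) * Gw (N + 2) m j l
        = Gw (N + 2) m j ⟨N + 1, by omega⟩ := fun j => sum_ind j ⟨N + 1, by omega⟩
  have h4 : ∑ j : Fin (N + 2), Gw (N + 2) m j ⟨0, by omega⟩ = ew N m := by
    unfold ew
    exact Finset.sum_congr rfl fun j _ => Gw_symm m j _
  have h5 : ∑ j : Fin (N + 2), Gw (N + 2) m j ⟨N + 1, by omega⟩ = ew N m := by
    have hstep : ∀ j : Fin (N + 2),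
        Gw (N + 2) m j ⟨N + 1, by omega⟩ = Gw (N + 2) m ⟨0, by omega⟩ (frev j) := by
      intro j
      rw [Gw_symm, Gw_flip]
      congr 1
      ext
      simp [frev]
    rw [Finset.sum_congr rfl fun j _ => hstep j]
    unfold ew
    exact Fintype.sum_bijective frev (Function.Involutive.bijective frev_frev)
      (fun j : Fin (N + 2) => Gw (N + 2) m ⟨0, by omega⟩ (frev j))
      (fun j : Fin (N + 2) => Gw (N + 2) m ⟨0, by omega⟩ j)
      (fun x => rfl)
  calc 3 * (Wk (N + 2) m).card
      = ∑ j : Fin (N + 2), ∑ l : Fin (N + 2), 3 * Gw (N + 2) m j l := by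
        rw [Wk_card_eq, Finset.mul_sum]
        exact Finset.sum_congr rfl fun j _ => Finset.mul_sum _ _ _
    _ = ∑ j : Fin (N + 2), ∑ l : Fin (N + 2),
          (((Finset.univ.filter fun k => Padj l k).card
            + ((if (l : ℕ) = 0 then 1 else 0) + (if (l : ℕ) = N + 1 then 1 else 0)))
              * Gw (N + 2) m j l) := by
        refine Finset.sum_congr rfl fun j _ => Finset.sum_congr rfl fun l _ => ?_
        rw [card_neighbors l]
    _ = (Wk (N + 2) (m + 1)).card + 2 * ew N m := by
        simp only [add_mul, Finset.sum_add_distrib]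
        rw [← h1]
        have e2 := Finset.sum_congr rfl fun j (_ : j ∈ Finset.univ) => h2 j
        have e3 := Finset.sum_congr rfl fun j (_ : j ∈ Finset.univ) => h3 j
        rw [e2, e3, h4, h5]
        ring

lemma Wk_zero_card (n : ℕ) : (Wk n 0).card = n := by
  classical
  have h : Wk n 0 = Finset.univ := by
    ext f
    simp only [mem_Wk, Finset.mem_univ, iff_true]
    exact fun i h => absurd h (by omega)
  rw [h, Finset.card_univ, Fintype.card_fun]
  simp

lemma c_closed (N : ℕ) (m : ℕ) :
    ((Wk (N + 2) m).card : ℤ) + 2 * ∑ r ∈ Finset.range m, 3 ^ (m - 1 - r) * (ew N r : ℤ)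
      = 3 ^ m * (N + 2) := by
  induction m with
  | zero => simp [Wk_zero_card]
  | succ m ih =>
    have hc := c_succ N m
    have hc' : ((Wk (N + 2) (m + 1)).card : ℤ)
        = 3 * ((Wk (N + 2) m).card : ℤ) - 2 * (ew N m : ℤ) := by
      have := congrArg (Nat.cast : ℕ → ℤ) hc
      push_cast at this
      linarith
    have hsum : ∑ r ∈ Finset.range (m + 1), (3 : ℤ) ^ (m + 1 - 1 - r) * (ew N r : ℤ)
        = 3 * ∑ r ∈ Finset.range m, 3 ^ (m - 1 - r) * (ew N r : ℤ) + (ew N m : ℤ) := by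
      rw [Finset.sum_range_succ]
      have hterm : ∀ r ∈ Finset.range m,
          (3 : ℤ) ^ (m + 1 - 1 - r) * (ew N r : ℤ) = 3 * (3 ^ (m - 1 - r) * (ew N r : ℤ)) := by
        intro r hr
        rw [Finset.mem_range] at hr
        rw [show m + 1 - 1 - r = (m - 1 - r) + 1 by omega, pow_succ]
        ring
      rw [Finset.sum_congr rfl hterm, ← Finset.mul_sum]
      simp
    rw [hc', hsum, pow_succ]
    push_cast
    linarith

noncomputable def gN (N m i : ℕ) : ℕ :=
  if h : i < N + 2 then Gw (N + 2) m ⟨0, by omega⟩ ⟨i, h⟩ else 0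

lemma gN_eta {N m : ℕ} (l : Fin (N + 2)) : gN N m (l : ℕ) = Gw (N + 2) m ⟨0, by omega⟩ l := by
  rw [gN, dif_pos l.isLt]

lemma gN_zero (N i : ℕ) : gN N 0 i = if i = 0 then 1 else 0 := by
  unfold gN
  split
  · next h =>
    rw [Gw_zero]
    by_cases hi : i = 0
    · rw [if_pos hi, if_pos (by ext; simp [hi])]
    · rw [if_neg hi, if_neg (fun hh => hi (by simpa [Fin.ext_iff] using hh.symm))]
  · next h => rw [if_neg (by omega)]

lemma gN_succ (N m i : ℕ) (h : i < N + 2) :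
    gN N (m + 1) i = (if 1 ≤ i then gN N m (i - 1) else 0) + gN N m i + gN N m (i + 1) := by
  have h0 : gN N (m + 1) i = Gw (N + 2) (m + 1) ⟨0, by omega⟩ ⟨i, h⟩ := dif_pos h
  rw [h0, Gw_succ]
  have hpt : ∀ l : Fin (N + 2),
      (if Padj l ⟨i, h⟩ then Gw (N + 2) m ⟨0, by omega⟩ l else 0)
        = (fun t => if t ≤ i + 1 ∧ i ≤ t + 1 then gN N m t else 0) (l : ℕ) := by
    intro l
    dsimp only
    by_cases hp : Padj l ⟨i, h⟩
    · rw [if_pos hp, if_pos ⟨hp.1, hp.2⟩, gN_eta]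
    · rw [if_neg hp, if_neg (fun hh => hp ⟨hh.1, hh.2⟩)]
  rw [Finset.sum_congr rfl fun l _ => hpt l,
    Fin.sum_univ_eq_sum_range (fun t => if t ≤ i + 1 ∧ i ≤ t + 1 then gN N m t else 0) (N + 2)]
  have e : ∑ t ∈ Finset.range (N + 2), (if t ≤ i + 1 ∧ i ≤ t + 1 then gN N m t else 0)
      = ∑ t ∈ (Finset.range (N + 2)).filter (fun t => t ≤ i + 1 ∧ i ≤ t + 1), gN N m t :=
    (Finset.sum_filter _ _).symm
  rw [e]
  rcases Nat.eq_zero_or_pos i with hi0 | hi1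
  · subst hi0
    rw [show (Finset.range (N + 2)).filter (fun t => t ≤ 0 + 1 ∧ 0 ≤ t + 1) = {0, 1} from by
      ext t; simp only [Finset.mem_filter, Finset.mem_range, Finset.mem_insert,
        Finset.mem_singleton]; omega]
    rw [Finset.sum_pair (by omega), if_neg (by omega), zero_add]
  · by_cases hiN : i ≤ N
    · rw [show (Finset.range (N + 2)).filter (fun t => t ≤ i + 1 ∧ i ≤ t + 1)
          = insert (i - 1) (insert i {i + 1}) from by
        ext t; simp only [Finset.mem_filter, Finset.mem_range, Finset.mem_insert,
          Finset.mem_singleton]; omega]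
      rw [Finset.sum_insert (by simp only [Finset.mem_insert, Finset.mem_singleton]; omega),
        Finset.sum_insert (by simp only [Finset.mem_singleton]; omega),
        Finset.sum_singleton, if_pos (by omega : 1 ≤ i), add_assoc]
    · have hiv : i = N + 1 := by omega
      subst hiv
      rw [show (Finset.range (N + 2)).filter (fun t => t ≤ N + 1 + 1 ∧ N + 1 ≤ t + 1)
          = {N, N + 1} from by
        ext t; simp only [Finset.mem_filter, Finset.mem_range, Finset.mem_insert,
          Finset.mem_singleton]; omega]
      rw [Finset.sum_pair (by omega), if_pos (by omega),
        show gN N m (N + 1 + 1) = 0 from dif_neg (by omega), add_zero]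
      rfl

lemma gN_bound (N : ℕ) : ∀ m i, m < i → gN N m i = 0 := by
  intro m
  induction m with
  | zero =>
    intro i hi
    rw [gN_zero, if_neg (by omega)]
  | succ m ih =>
    intro i hi
    by_cases h : i < N + 2
    · rw [gN_succ N m i h]
      rw [ih i (by omega), ih (i + 1) (by omega)]
      rcases Nat.eq_zero_or_pos i with h0 | h1
      · omega
      · rw [if_pos (by omega : 1 ≤ i), ih (i - 1) (by omega)]
    · exact dif_neg h

lemma gN_diag (N : ℕ) : ∀ m, m ≤ N + 1 → gN N m m = 1 := by
  intro m
  induction m with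
  | zero =>
    intro _
    rw [gN_zero, if_pos rfl]
  | succ m ih =>
    intro hm
    rw [gN_succ N m (m + 1) (by omega), if_pos (by omega)]
    rw [show m + 1 - 1 = m from rfl, ih (by omega),
      gN_bound N m (m + 1) (by omega), gN_bound N m (m + 1 + 1) (by omega)]

lemma aF_eq (N : ℕ) : ∀ r, 1 ≤ r → r ≤ N → ∀ p, 1 ≤ p → p ≤ N + 1 →
    aF (N + 2) r p = gN N r (p - 1) := by
  intro r
  induction r with
  | zero => omega
  | succ k ih =>
    cases k with
    | zero =>
      intro _ _ p hp1 hp2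
      rw [show aF (N + 2) 1 p = if p = 1 ∨ p = 2 then 1 else 0 from rfl]
      rw [gN_succ N 0 (p - 1) (by omega), gN_zero, gN_zero, gN_zero]
      split_ifs <;> first | omega | exact ‹False›.elim
    | succ k' =>
      intro hr1 hr2 p hp1 hp2
      have hN : 2 ≤ N := by omega
      simp only [aF]
      rw [show N + 2 - 1 = N + 1 from rfl, show N + 2 - 2 = N from rfl]
      split_ifs with hp hk hp1
      · subst hp
        rw [show N + 1 - 1 = N from rfl, hk]
        exact (gN_diag N N (by omega)).symm
      · subst hp
        rw [show N + 1 - 1 = N from rfl]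
        exact (gN_bound N (k' + 2) N (by omega)).symm
      · subst hp1
        rw [ih (by omega) (by omega) 1 (by omega) (by omega),
          ih (by omega) (by omega) 2 (by omega) (by omega)]
        rw [show (1 : ℕ) - 1 = 0 from rfl, show (2 : ℕ) - 1 = 1 from rfl]
        rw [gN_succ N (k' + 1) 0 (by omega), if_neg (by omega), zero_add]
      · rw [ih (by omega) (by omega) (p - 1) (by omega) (by omega),
          ih (by omega) (by omega) p (by omega) (by omega),
          ih (by omega) (by omega) (p + 1) (by omega) (by omega)]
        rw [gN_succ N (k' + 1) (p - 1) (by omega), if_pos (by omega : 1 ≤ p - 1)]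
        rw [show p + 1 - 1 = p - 1 + 1 by omega]

lemma ew_eq_sum (N m : ℕ) : ew N m = ∑ i ∈ Finset.range (N + 2), gN N m i := by
  unfold ew
  rw [← Fin.sum_univ_eq_sum_range (gN N m) (N + 2)]
  exact Finset.sum_congr rfl fun j _ => (gN_eta j).symm

lemma ew_zero (N : ℕ) : ew N 0 = 1 := by
  unfold ew
  rw [Finset.sum_congr rfl fun j (_ : j ∈ Finset.univ) => Gw_zero _ j]
  rw [Finset.sum_ite_eq Finset.univ (⟨0, by omega⟩ : Fin (N + 2)) (fun _ => 1)]
  simp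

lemma bF_eq (N r : ℕ) (h1 : 1 ≤ r) (h2 : r ≤ N) : bF (N + 2) r = 2 * ew N r := by
  unfold bF
  congr 1
  rw [show (N + 2) - 1 = N + 1 from rfl]
  rw [Finset.sum_congr rfl (fun p hp => aF_eq N r h1 h2 p
    (Finset.mem_Icc.1 hp).1 (Finset.mem_Icc.1 hp).2)]
  rw [ew_eq_sum, Finset.sum_range_succ, gN_bound N r (N + 1) (by omega), add_zero]
  refine Finset.sum_bij' (i := fun p _ => p - 1) (j := fun t _ => t + 1) ?_ ?_ ?_ ?_ ?_
  · intro a ha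
    rw [Finset.mem_Icc] at ha
    rw [Finset.mem_range]
    omega
  · intro a ha
    rw [Finset.mem_range] at ha
    rw [Finset.mem_Icc]
    omega
  · intro a ha
    rw [Finset.mem_Icc] at ha
    omega
  · intro a ha
    omega
  · intro a ha
    rfl

noncomputable def WkE (N : ℕ) : Finset (Function.End (Fin (N + 2))) := Wk (N + 2) (N + 1)

lemma mem_WkE {N : ℕ} {f : Function.End (Fin (N + 2))} :
    f ∈ WkE N ↔ WCond (n := N + 2) (m := N + 1) f := mem_Wk

lemma WkE_card (N : ℕ) : (WkE N).card = (Wk (N + 2) (N + 1)).card := rfl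

/-- `|wEnd P_n| = 3^{n-2}(3n-2) - ∑_{r=1}^{n-2} 3^{n-r-2} b(r)`. -/
theorem card_wEnd_path (n : ℕ) (hn : 2 ≤ n) :
    ({f : Function.End (Fin n) | IsWEndo f}.ncard : ℤ) =
      3 ^ (n - 2) * (3 * (n : ℤ) - 2)
        - ∑ r ∈ Finset.Icc 1 (n - 2), 3 ^ (n - r - 2) * (bF n r : ℤ) := by
  obtain ⟨N, rfl⟩ : ∃ N, n = N + 2 := ⟨n - 2, by omega⟩
  have hset : {f : Function.End (Fin (N + 2)) | IsWEndo f} = ↑(WkE N) := by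
    ext f
    simp only [Set.mem_setOf_eq, Finset.mem_coe, mem_WkE]
    constructor
    · intro hf i hi
      have h2 := hf i hi
      rw [abs_le] at h2
      constructor <;> omega
    · intro hf i hi
      obtain ⟨a, b⟩ := hf i hi
      rw [abs_le]
      constructor <;> push_cast <;> omega
  rw [hset, Set.ncard_coe_finset, WkE_card]
  have hcc := c_closed N (N + 1)
  rw [Finset.sum_range_succ' (fun r => (3 : ℤ) ^ (N + 1 - 1 - r) * (ew N r : ℤ)) N] at hcc
  rw [ew_zero N] at hcc
  have hE : ∑ r ∈ Finset.Icc 1 (N + 2 - 2), (3 : ℤ) ^ (N + 2 - r - 2) * (bF (N + 2) r : ℤ)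
      = ∑ t ∈ Finset.range N, 2 * ((3 : ℤ) ^ (N + 1 - 1 - (t + 1)) * (ew N (t + 1) : ℤ)) := by
    rw [show N + 2 - 2 = N from rfl]
    refine Finset.sum_bij' (i := fun r _ => r - 1) (j := fun t _ => t + 1) ?_ ?_ ?_ ?_ ?_
    · intro a ha
      rw [Finset.mem_Icc] at ha
      rw [Finset.mem_range]
      omega
    · intro a ha
      rw [Finset.mem_range] at ha
      rw [Finset.mem_Icc]
      omega
    · intro a ha
      rw [Finset.mem_Icc] at ha
      omega
    · intro a ha
      omega
    · intro a ha
      rw [Finset.mem_Icc] at ha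
      rw [show a - 1 + 1 = a by omega]
      rw [show N + 1 - 1 - a = N + 2 - a - 2 by omega]
      rw [bF_eq N a ha.1 ha.2]
      push_cast
      ring
  rw [show (N : ℕ) + 2 - 2 = N from rfl] at *
  rw [hE]
  have hS : (∑ t ∈ Finset.range N, 2 * ((3 : ℤ) ^ (N + 1 - 1 - (t + 1)) * (ew N (t + 1) : ℤ)))
      = 2 * ∑ t ∈ Finset.range N, (3 : ℤ) ^ (N + 1 - 1 - (t + 1)) * (ew N (t + 1) : ℤ) :=
    (Finset.mul_sum _ _ _).symm
  rw [hS]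
  rw [show N + 1 - 1 - 0 = N from rfl] at hcc
  have hp : (3 : ℤ) ^ (N + 1) = 3 ^ N * 3 := pow_succ 3 N
  push_cast at hcc ⊢
  rw [hp] at hcc
  linear_combination hcc
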